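/- Let E be a real Banach space, C ⊆ E, and let T_1,…,T_N : C → C be uniformly L-Lipschitz mappings (L > 0). For n ≥ 1 write n = (p_n − 1)N + j_n with j_n ∈ {1,…,N} (i.e. j_n = ((n−1) mod N) + 1 and p_n = ⌊(n−1)/N⌋ + 1). Let {x_n} ⊂ C be a sequence such that ‖x_n − T_{j_n}^{p_n} x_n‖ → 0 as n → ∞ and ‖x_n − x_{n+l}‖ → 0 as n → ∞ for every l ∈ {1,…,N}. Then for each l ∈ {1,…,N}, ‖x_n − T_l x_n‖ → 0 as n → ∞. -/

import Mathlib

open Filter Topology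

/-- Lemma 3.13: if `‖xₙ - T_{jₙ}^{pₙ} xₙ‖ → 0` and `‖xₙ - x_{n+l}‖ → 0` for each
`l ∈ {1,…,N}`, then `‖xₙ - T_l xₙ‖ → 0` for every `l`. Here, for `n ≥ 1`,
`jₙ = ((n-1) % N) + 1` and `pₙ = (n-1)/N + 1`. -/
theorem stmt_8
    {E : Type*} [NormedAddCommGroup E] [NormedSpace ℝ E]
    (C : Set E) (N : ℕ) (hN : 0 < N)
    (T : Fin N → E → E) (hTmaps : ∀ i, Set.MapsTo (T i) C C)
    (L : ℝ) (hL : 0 < L)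
    (hLip : ∀ i, ∀ n, 1 ≤ n → ∀ x ∈ C, ∀ y ∈ C,
      ‖(T i)^[n] x - (T i)^[n] y‖ ≤ L * ‖x - y‖)
    (x : ℕ → E) (hx : ∀ n, x n ∈ C)
    (h1 : Tendsto
      (fun n => ‖x n - (T ⟨(n - 1) % N, Nat.mod_lt _ hN⟩)^[(n - 1) / N + 1] (x n)‖)
      atTop (𝓝 0))
    (h2 : ∀ l, 1 ≤ l → l ≤ N → Tendsto (fun n => ‖x n - x (n + l)‖) atTop (𝓝 0)) :
    ∀ i : Fin N, Tendsto (fun n => ‖x n - T i (x n)‖) atTop (𝓝 0) := by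
  set σ : ℕ → ℝ := fun n => ‖x n - (T ⟨(n - 1) % N, Nat.mod_lt _ hN⟩)^[(n - 1) / N + 1] (x n)‖
    with hσdef
  set a : ℕ → ℝ := fun n => ‖x n - T ⟨(n - 1) % N, Nat.mod_lt _ hN⟩ (x n)‖ with hadef
  -- Step 1: a → 0
  have key : ∀ m : ℕ, a (m + N + 1) ≤
      σ (m + N + 1) + L * σ (m + 1) + (L * (L + 1)) * ‖x (m + 1) - x (m + 1 + N)‖ := by
    intro m
    set j : Fin N := ⟨m % N, Nat.mod_lt _ hN⟩ with hj
    have hn1 : m + N + 1 - 1 = m + N := rfl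
    have hu1 : m + 1 - 1 = m := rfl
    have hjn : (⟨(m + N + 1 - 1) % N, Nat.mod_lt _ hN⟩ : Fin N) = j := by
      apply Fin.ext; simp [hn1, Nat.add_mod_right, hj]
    have hju : (⟨(m + 1 - 1) % N, Nat.mod_lt _ hN⟩ : Fin N) = j := by
      apply Fin.ext; simp [hu1, hj]
    have hdn : (m + N + 1 - 1) / N + 1 = m / N + 2 := by
      rw [hn1, Nat.add_div_right _ hN]
    have hdu : (m + 1 - 1) / N + 1 = m / N + 1 := by rw [hu1]
    set q := m / N with hq
    have hσn : σ (m + N + 1) = ‖x (m + N + 1) - (T j)^[q + 2] (x (m + N + 1))‖ := by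
      rw [hσdef]; simp only [hjn, hdn]
    have hσu : σ (m + 1) = ‖x (m + 1) - (T j)^[q + 1] (x (m + 1))‖ := by
      rw [hσdef]; simp only [hju, hdu]
    have han : a (m + N + 1) = ‖x (m + N + 1) - T j (x (m + N + 1))‖ := by
      rw [hadef]; simp only [hjn]
    set xn := x (m + N + 1) with hxn
    set xu := x (m + 1) with hxu
    have hxnC : xn ∈ C := hx _
    have hxuC : xu ∈ C := hx _
    have hit : ∀ k, (T j)^[k] xn ∈ C := fun k => (hTmaps j).iterate k hxnC
    have e1 : ‖xn - T j xn‖ ≤ ‖xn - (T j)^[q + 2] xn‖ + ‖(T j)^[q + 2] xn - T j xn‖ := by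
      have := norm_sub_le_norm_sub_add_norm_sub xn ((T j)^[q + 2] xn) (T j xn)
      linarith
    have e2 : ‖(T j)^[q + 2] xn - T j xn‖ ≤ L * ‖(T j)^[q + 1] xn - xn‖ := by
      have hq2 : q + 2 = 1 + (q + 1) := by ring
      have := hLip j 1 le_rfl ((T j)^[q + 1] xn) (hit _) xn hxnC
      simpa [hq2, Function.iterate_add_apply] using this
    have e3 : ‖(T j)^[q + 1] xn - xn‖ ≤
        ‖(T j)^[q + 1] xn - (T j)^[q + 1] xu‖ + ‖(T j)^[q + 1] xu - xu‖ + ‖xu - xn‖ := by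
      have t1 := norm_sub_le_norm_sub_add_norm_sub ((T j)^[q+1] xn) ((T j)^[q+1] xu) xn
      have t2 := norm_sub_le_norm_sub_add_norm_sub ((T j)^[q+1] xu) xu xn
      linarith
    have e4 : ‖(T j)^[q + 1] xn - (T j)^[q + 1] xu‖ ≤ L * ‖xn - xu‖ :=
      hLip j (q + 1) (Nat.le_add_left 1 q) xn hxnC xu hxuC
    have e5 : ‖(T j)^[q + 1] xu - xu‖ = σ (m + 1) := by
      rw [hσu, norm_sub_rev]
    have e6 : ‖xu - xn‖ = ‖x (m + 1) - x (m + 1 + N)‖ := by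
      have hmN : m + 1 + N = m + N + 1 := by omega
      rw [hxu, hxn, hmN]
    have e7 : ‖xn - xu‖ = ‖x (m + 1) - x (m + 1 + N)‖ := by
      rw [norm_sub_rev]; exact e6
    have hσn' : ‖xn - (T j)^[q + 2] xn‖ = σ (m + N + 1) := hσn.symm
    rw [han]
    calc ‖xn - T j xn‖ ≤ ‖xn - (T j)^[q + 2] xn‖ + ‖(T j)^[q + 2] xn - T j xn‖ := e1
      _ ≤ σ (m + N + 1) + L * ‖(T j)^[q + 1] xn - xn‖ := by rw [hσn']; linarith
      _ ≤ σ (m + N + 1) + L * (L * ‖x (m + 1) - x (m + 1 + N)‖ + σ (m + 1)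
            + ‖x (m + 1) - x (m + 1 + N)‖) := by
          have e4' : ‖(T j)^[q + 1] xn - (T j)^[q + 1] xu‖
              ≤ L * ‖x (m + 1) - x (m + 1 + N)‖ := e7 ▸ e4
          have : ‖(T j)^[q + 1] xn - xn‖ ≤ L * ‖x (m + 1) - x (m + 1 + N)‖ + σ (m + 1)
              + ‖x (m + 1) - x (m + 1 + N)‖ := by
            linarith [e3, e4', e5, e6]
          nlinarith [this, hL.le]
      _ = σ (m + N + 1) + L * σ (m + 1) + (L * (L + 1)) * ‖x (m + 1) - x (m + 1 + N)‖ := by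
          ring
  have hσ0 : Tendsto σ atTop (𝓝 0) := h1
  have ha0 : Tendsto a atTop (𝓝 0) := by
    rw [← tendsto_add_atTop_iff_nat (N + 1)]
    have hub : Tendsto (fun m => σ (m + N + 1) + L * σ (m + 1)
        + (L * (L + 1)) * ‖x (m + 1) - x (m + 1 + N)‖) atTop (𝓝 0) := by
      have t1 : Tendsto (fun m => σ (m + N + 1)) atTop (𝓝 0) := by
        have := (tendsto_add_atTop_iff_nat (N + 1)).mpr hσ0
        simpa [add_assoc] using this
      have t2 : Tendsto (fun m => σ (m + 1)) atTop (𝓝 0) :=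
        (tendsto_add_atTop_iff_nat 1).mpr hσ0
      have t3 : Tendsto (fun m => ‖x (m + 1) - x (m + 1 + N)‖) atTop (𝓝 0) :=
        (tendsto_add_atTop_iff_nat 1).mpr (h2 N (by omega) le_rfl)
      have := (t1.add (t2.const_mul L)).add (t3.const_mul (L * (L + 1)))
      simpa using this
    refine squeeze_zero' (Eventually.of_forall fun m => norm_nonneg _)
      (Eventually.of_forall fun m => ?_) hub
    simpa [add_assoc] using key m
  -- Step 2
  intro i
  -- for each n there is k ∈ [1,N] with (n+k-1) % N = i
  have hex : ∀ n : ℕ, ∃ k, 1 ≤ k ∧ k ≤ N ∧ (n + k - 1) % N = i.val := by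
    intro n
    refine ⟨(i.val + N - n % N) % N + 1, by omega, ?_, ?_⟩
    · have := Nat.mod_lt (i.val + N - n % N) hN; omega
    · have h1' : n + ((i.val + N - n % N) % N + 1) - 1 = n + (i.val + N - n % N) % N := by
        omega
      rw [h1', Nat.add_mod_mod]
      have hr : n % N ≤ n := Nat.mod_le _ _
      have hrN : n % N < N := Nat.mod_lt _ hN
      have : n + (i.val + N - n % N) = N * (n / N) + N + i.val := by
        have hd := Nat.div_add_mod n N
        omega
      rw [this]
      have : N * (n / N) + N + i.val = N * (n / N + 1) + i.val := by ring
      rw [this, Nat.mul_add_mod, Nat.mod_eq_of_lt i.isLt]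
  set S : ℕ → ℝ := fun n => ∑ l ∈ Finset.Icc 1 N, ‖x n - x (n + l)‖ with hS
  set A : ℕ → ℝ := fun n => ∑ l ∈ Finset.Icc 1 N, a (n + l) with hA
  have hSnn : ∀ n, ∀ l ∈ Finset.Icc 1 N, ‖x n - x (n + l)‖ ≤ S n := by
    intro n l hl
    exact Finset.single_le_sum (f := fun l => ‖x n - x (n + l)‖)
      (fun _ _ => norm_nonneg _) hl
  have hAnn : ∀ n, ∀ l ∈ Finset.Icc 1 N, a (n + l) ≤ A n := by
    intro n l hl
    exact Finset.single_le_sum (f := fun l => a (n + l))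
      (fun k _ => norm_nonneg _) hl
  have hS0 : Tendsto S atTop (𝓝 0) := by
    have : Tendsto (fun n => ∑ l ∈ Finset.Icc 1 N, ‖x n - x (n + l)‖) atTop
        (𝓝 (∑ l ∈ Finset.Icc 1 N, (0 : ℝ))) := by
      exact tendsto_finset_sum _ (fun l hl => by
        simp only [Finset.mem_Icc] at hl
        exact h2 l hl.1 hl.2)
    simpa using this
  have hA0 : Tendsto A atTop (𝓝 0) := by
    have : Tendsto (fun n => ∑ l ∈ Finset.Icc 1 N, a (n + l)) atTop
        (𝓝 (∑ l ∈ Finset.Icc 1 N, (0 : ℝ))) := by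
      exact tendsto_finset_sum _ (fun l hl => by
        have : Tendsto (fun n => a (n + l)) atTop (𝓝 0) :=
          (tendsto_add_atTop_iff_nat l).mpr ha0
        exact this)
    simpa using this
  have bound : ∀ n, ‖x n - T i (x n)‖ ≤ (1 + L) * S n + A n := by
    intro n
    obtain ⟨k, hk1, hkN, hkmod⟩ := hex n
    have hji : (⟨(n + k - 1) % N, Nat.mod_lt _ hN⟩ : Fin N) = i := by
      apply Fin.ext; simpa using hkmod
    have hak : a (n + k) = ‖x (n + k) - T i (x (n + k))‖ := by
      rw [hadef]; simp only [hji]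
    have hTlip : ‖T i (x (n + k)) - T i (x n)‖ ≤ L * ‖x (n + k) - x n‖ := by
      have := hLip i 1 le_rfl (x (n + k)) (hx _) (x n) (hx _)
      simpa using this
    have tri : ‖x n - T i (x n)‖ ≤ ‖x n - x (n + k)‖ + ‖x (n + k) - T i (x (n + k))‖
        + ‖T i (x (n + k)) - T i (x n)‖ := by
      have t1 := norm_sub_le_norm_sub_add_norm_sub (x n) (x (n + k)) (T i (x n))
      have t2 := norm_sub_le_norm_sub_add_norm_sub (x (n + k)) (T i (x (n + k))) (T i (x n))
      linarith
    have hmem : k ∈ Finset.Icc 1 N := Finset.mem_Icc.mpr ⟨hk1, hkN⟩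
    have b1 : ‖x n - x (n + k)‖ ≤ S n := hSnn n k hmem
    have b2 : a (n + k) ≤ A n := hAnn n k hmem
    have b3 : ‖x (n + k) - x n‖ = ‖x n - x (n + k)‖ := norm_sub_rev _ _
    have hSnonneg : 0 ≤ S n := Finset.sum_nonneg fun _ _ => norm_nonneg _
    rw [hak] at b2
    nlinarith [hL.le]
  have hub : Tendsto (fun n => (1 + L) * S n + A n) atTop (𝓝 0) := by
    have := (hS0.const_mul (1 + L)).add hA0
    simpa using this
  exact squeeze_zero' (Eventually.of_forall fun n => norm_nonneg _)
    (Eventually.of_forall bound) hub
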